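/- Let K be an n×n symmetric positive-definite real matrix with largest eigenvalue λₙ, X an n×p real matrix of full column rank, P := I − X(XᴴX)⁻¹Xᴴ, and for real t with 0 ≤ t < 1/λₙ define Σ_t := I + tK. Then Σ_t is invertible, XᴴΣ_t⁻¹X is invertible, and Σ_t⁻¹ − Σ_t⁻¹X(XᴴΣ_t⁻¹X)⁻¹XᴴΣ_t⁻¹ = P(I + tKP)⁻¹ = P·Σ_{i=0}^{∞}(−tKP)^i, where the Neumann series converges since ‖tKP‖ < 1 in operator norm. -/

import Mathlib

set_option maxHeartbeats 1000000


open Matrix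

section Aux

/-- The star algebra equivalence from matrices to continuous linear maps on Euclidean space. -/
noncomputable def auxPhi (n : ℕ) : Matrix (Fin n) (Fin n) ℝ ≃⋆ₐ[ℝ]
    (EuclideanSpace ℝ (Fin n) →L[ℝ] EuclideanSpace ℝ (Fin n)) := Matrix.toEuclideanCLM

lemma auxPhi_pow {n : ℕ} (A : Matrix (Fin n) (Fin n) ℝ) (k : ℕ) :
    auxPhi n (A ^ k) = (auxPhi n A) ^ k := by
  induction k with
  | zero => simpa [pow_zero] using map_one (auxPhi n)
  | succ m ih => rw [pow_succ, pow_succ, _root_.map_mul, ih]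

noncomputable def auxPsiLin (n : ℕ) :
    (EuclideanSpace ℝ (Fin n) →L[ℝ] EuclideanSpace ℝ (Fin n)) →ₗ[ℝ] Matrix (Fin n) (Fin n) ℝ where
  toFun := (auxPhi n).symm
  map_add' x y := map_add _ x y
  map_smul' c x := map_smul _ c x

lemma auxPsi_cont (n : ℕ) : Continuous ((auxPhi n).symm) :=
  (auxPsiLin n).continuous_of_finiteDimensional

lemma auxPhi_star {n : ℕ} (A : Matrix (Fin n) (Fin n) ℝ) (h : A.IsHermitian) :
    star (auxPhi n A) = auxPhi n A := by
  rw [← map_star]; exact congrArg _ (by rw [Matrix.star_eq_conjTranspose, h.eq])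

lemma auxPhi_apply_normsq {n : ℕ} (A : Matrix (Fin n) (Fin n) ℝ) (v : EuclideanSpace ℝ (Fin n)) :
    ‖auxPhi n A v‖ ^ 2 = star (WithLp.equiv 2 _ v) ⬝ᵥ ((Aᴴ * A) *ᵥ (WithLp.equiv 2 _ v)) := by
  set w := WithLp.equiv 2 _ v with hw
  have h1 : ‖auxPhi n A v‖ ^ 2 = (inner ℝ (auxPhi n A v) (auxPhi n A v) : ℝ) :=
    (real_inner_self_eq_norm_sq _).symm
  rw [h1, EuclideanSpace.inner_eq_star_dotProduct, dotProduct_comm]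
  have h2 : (auxPhi n A v).ofLp = A *ᵥ w := by
    exact Matrix.ofLp_toEuclideanCLM A v
  rw [h2, ← Matrix.mulVec_mulVec, Matrix.dotProduct_mulVec (star w) Aᴴ,
    Matrix.vecMul_conjTranspose, star_star]

lemma aux_cstar {n : ℕ} (T : EuclideanSpace ℝ (Fin n) →L[ℝ] EuclideanSpace ℝ (Fin n)) :
    ‖star T * T‖ = ‖T‖ * ‖T‖ := by
  rw [ContinuousLinearMap.star_eq_adjoint]
  exact ContinuousLinearMap.norm_adjoint_comp_self T

lemma aux_inj {n p : ℕ} (X : Matrix (Fin n) (Fin p) ℝ) (hX : X.rank = p) :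
    Function.Injective X.mulVecLin := by
  rw [← LinearMap.ker_eq_bot (f := X.mulVecLin), ← Submodule.finrank_eq_zero]
  have h := X.mulVecLin.finrank_range_add_finrank_ker
  rw [Matrix.rank] at hX
  rw [hX] at h
  simp only [Module.finrank_pi, Fintype.card_fin] at h
  omega

lemma aux_conj_posdef {n p : ℕ} {M : Matrix (Fin n) (Fin n) ℝ} (hM : M.PosDef)
    (X : Matrix (Fin n) (Fin p) ℝ) (hX : X.rank = p) : (Xᴴ * M * X).PosDef := by
  refine Matrix.PosDef.of_dotProduct_mulVec_pos ?_ fun x hx => ?_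
  · show (Xᴴ * M * X)ᴴ = Xᴴ * M * X
    rw [conjTranspose_mul, conjTranspose_mul, conjTranspose_conjTranspose, hM.1.eq,
      Matrix.mul_assoc]
  · have hXx : X *ᵥ x ≠ 0 := by
      intro h
      apply hx
      have := aux_inj X hX (a₁ := x) (a₂ := 0)
      simpa [h] using this
    have key : star x ⬝ᵥ ((Xᴴ * M * X) *ᵥ x) = star (X *ᵥ x) ⬝ᵥ (M *ᵥ (X *ᵥ x)) := by
      rw [← Matrix.mulVec_mulVec, ← Matrix.mulVec_mulVec, Matrix.dotProduct_mulVec (star x),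
        Matrix.vecMul_conjTranspose, star_star]
    rw [key]
    exact hM.dotProduct_mulVec_pos hXx

lemma aux_psd {n : ℕ} (K : Matrix (Fin n) (Fin n) ℝ) (hK : K.PosDef)
    (lam : ℝ) (hlam : IsGreatest (Set.range hK.1.eigenvalues) lam) :
    (lam • (1 : Matrix (Fin n) (Fin n) ℝ) - K).PosSemidef := by
  set U : Matrix (Fin n) (Fin n) ℝ := (hK.1.eigenvectorUnitary : Matrix (Fin n) (Fin n) ℝ) with hU
  have hUU : U * star U = 1 := Matrix.mem_unitaryGroup_iff.mp hK.1.eigenvectorUnitary.2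
  have hD : (Matrix.diagonal (fun i => lam - hK.1.eigenvalues i)).PosSemidef := by
    rw [Matrix.posSemidef_diagonal_iff]
    intro i
    have := hlam.2 ⟨i, rfl⟩
    linarith
  have key : lam • (1 : Matrix (Fin n) (Fin n) ℝ) - K
      = U * Matrix.diagonal (fun i => lam - hK.1.eigenvalues i) * star U := by
    conv_lhs => rw [hK.1.spectral_theorem]
    have h2 : Matrix.diagonal (fun i => lam - hK.1.eigenvalues i)
        = lam • 1 - Matrix.diagonal (RCLike.ofReal ∘ hK.1.eigenvalues) := by
      ext i j
      by_cases h : i = j <;> simp [Matrix.diagonal_apply, Matrix.one_apply, h]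
    rw [h2, Matrix.mul_sub, Matrix.sub_mul]
    congr 1
    rw [Matrix.mul_smul, Matrix.mul_one, Matrix.smul_mul, hUU]
  rw [key, Matrix.star_eq_conjTranspose]
  exact hD.mul_mul_conjTranspose_same U

lemma aux_rayleigh {n : ℕ} (K : Matrix (Fin n) (Fin n) ℝ) (hK : K.PosDef)
    (lam : ℝ) (hlam : IsGreatest (Set.range hK.1.eigenvalues) lam) (w : Fin n → ℝ) :
    star w ⬝ᵥ (K *ᵥ w) ≤ lam * (star w ⬝ᵥ w) := by
  have h := (aux_psd K hK lam hlam).dotProduct_mulVec_nonneg w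
  rw [Matrix.sub_mulVec, dotProduct_sub, Matrix.smul_mulVec, Matrix.one_mulVec,
    dotProduct_smul] at h
  simp only [smul_eq_mul] at h
  linarith

open scoped MatrixOrder in
lemma aux_normK {n : ℕ} (K : Matrix (Fin n) (Fin n) ℝ) (hK : K.PosDef)
    (lam : ℝ) (hlam : IsGreatest (Set.range hK.1.eigenvalues) lam) :
    ‖auxPhi n K‖ ≤ lam := by
  have hlam0 : 0 ≤ lam := by
    obtain ⟨i, hi⟩ := hlam.1
    exact le_of_lt (hi ▸ hK.eigenvalues_pos i)
  set R := CFC.sqrt K with hRdef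
  have hRR : R * R = K := CFC.sqrt_mul_sqrt_self K (Matrix.nonneg_iff_posSemidef.mpr hK.posSemidef)
  have hRH : R.IsHermitian := (Matrix.nonneg_iff_posSemidef.mp (CFC.sqrt_nonneg K)).1
  have hRnorm : ‖auxPhi n R‖ ≤ Real.sqrt lam := by
    refine ContinuousLinearMap.opNorm_le_bound _ (Real.sqrt_nonneg _) (fun v => ?_)
    have hsq : ‖auxPhi n R v‖ ^ 2 ≤ lam * ‖v‖ ^ 2 := by
      have h1 := auxPhi_apply_normsq R v
      rw [hRH.eq, hRR] at h1
      have h2 := aux_rayleigh K hK lam hlam (WithLp.equiv 2 _ v)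
      have h3 : star (WithLp.equiv 2 _ v) ⬝ᵥ (WithLp.equiv 2 _ v) = ‖v‖ ^ 2 := by
        rw [dotProduct_comm]
        exact (EuclideanSpace.inner_eq_star_dotProduct v v).symm.trans (real_inner_self_eq_norm_sq v)
      rw [h1]
      rw [h3] at h2
      exact h2
    calc ‖auxPhi n R v‖ = Real.sqrt (‖auxPhi n R v‖ ^ 2) := (Real.sqrt_sq (norm_nonneg _)).symm
    _ ≤ Real.sqrt (lam * ‖v‖ ^ 2) := Real.sqrt_le_sqrt hsq
    _ = Real.sqrt lam * ‖v‖ := by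
        rw [Real.sqrt_mul hlam0, Real.sqrt_sq (norm_nonneg _)]
  have hKnorm : ‖auxPhi n K‖ = ‖auxPhi n R‖ * ‖auxPhi n R‖ := by
    rw [← hRR, _root_.map_mul]
    conv_lhs => rw [show auxPhi n R * auxPhi n R = star (auxPhi n R) * auxPhi n R by
      rw [auxPhi_star R hRH]]
    exact aux_cstar _
  rw [hKnorm]
  calc ‖auxPhi n R‖ * ‖auxPhi n R‖ ≤ Real.sqrt lam * Real.sqrt lam :=
        mul_le_mul hRnorm hRnorm (norm_nonneg _) (Real.sqrt_nonneg _)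
  _ = lam := Real.mul_self_sqrt hlam0

lemma aux_normProj {n : ℕ} (P : Matrix (Fin n) (Fin n) ℝ) (hP2 : P * P = P)
    (hPH : P.IsHermitian) : ‖auxPhi n P‖ ≤ 1 := by
  have h := aux_cstar (auxPhi n P)
  rw [auxPhi_star P hPH, ← _root_.map_mul, hP2] at h
  nlinarith [norm_nonneg (auxPhi n P)]

end Aux

/-- For SPD `K` with largest eigenvalue `λₙ`, full-column-rank `X`,
`P = I − X(XᴴX)⁻¹Xᴴ`, and `0 ≤ t < 1/λₙ`, the matrix `Σ_t = I + tK` is invertible,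
`XᴴΣ_t⁻¹X` is invertible, and
`Σ_t⁻¹ − Σ_t⁻¹X(XᴴΣ_t⁻¹X)⁻¹XᴴΣ_t⁻¹ = P(I + tKP)⁻¹ = P·Σ_{i=0}^∞ (−tKP)^i`,
the Neumann series being summable. -/
theorem stmt19 {n p : ℕ}
    (K : Matrix (Fin n) (Fin n) ℝ) (hK : K.PosDef)
    (lam : ℝ) (hlam : IsGreatest (Set.range hK.1.eigenvalues) lam)
    (X : Matrix (Fin n) (Fin p) ℝ) (hX : X.rank = p)
    (P : Matrix (Fin n) (Fin n) ℝ) (hP : P = 1 - X * (Xᴴ * X)⁻¹ * Xᴴ)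
    (t : ℝ) (ht0 : 0 ≤ t) (ht : t < 1 / lam)
    (St : Matrix (Fin n) (Fin n) ℝ) (hSt : St = 1 + t • K) :
    IsUnit St.det ∧ IsUnit (Xᴴ * St⁻¹ * X).det ∧
    St⁻¹ - St⁻¹ * X * (Xᴴ * St⁻¹ * X)⁻¹ * Xᴴ * St⁻¹ = P * (1 + t • (K * P))⁻¹ ∧
    Summable (fun i : ℕ => (-(t • (K * P))) ^ i) ∧
    P * (1 + t • (K * P))⁻¹ = P * ∑' i : ℕ, (-(t • (K * P))) ^ i := by
  have hlampos : 0 < lam := by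
    obtain ⟨i, hi⟩ := hlam.1
    exact hi ▸ hK.eigenvalues_pos i
  have htlam : t * lam < 1 := (lt_div_iff₀ hlampos).mp ht
  classical
  -- positive definiteness facts
  have hXX : (Xᴴ * X).PosDef := by
    simpa [Matrix.mul_one] using aux_conj_posdef (Matrix.PosDef.one) X hX
  have hXXdet : IsUnit (Xᴴ * X).det := hXX.det_pos.ne'.isUnit
  have hKsm : (t • K).PosSemidef := by
    refine Matrix.PosSemidef.of_dotProduct_mulVec_nonneg ?_ fun x => ?_
    · show (t • K)ᴴ = t • K
      rw [Matrix.conjTranspose_smul, hK.1.eq, star_trivial]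
    · rw [Matrix.smul_mulVec, dotProduct_smul, smul_eq_mul]
      exact mul_nonneg ht0 (hK.posSemidef.dotProduct_mulVec_nonneg x)
  have hStPD : St.PosDef := hSt ▸ Matrix.PosDef.one.add_posSemidef hKsm
  have hdet1 : IsUnit St.det := hStPD.det_pos.ne'.isUnit
  have hXSX : (Xᴴ * St⁻¹ * X).PosDef := aux_conj_posdef hStPD.inv X hX
  have hdet2 : IsUnit (Xᴴ * St⁻¹ * X).det := hXSX.det_pos.ne'.isUnit
  -- projection facts
  have hPH : P.IsHermitian := by
    show Pᴴ = P
    rw [hP]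
    simp only [Matrix.conjTranspose_sub, Matrix.conjTranspose_one, Matrix.conjTranspose_mul,
      Matrix.conjTranspose_nonsing_inv, Matrix.conjTranspose_conjTranspose, Matrix.mul_assoc]
  have hPX : P * X = 0 := by
    rw [hP, Matrix.sub_mul, Matrix.one_mul, Matrix.mul_assoc (X * (Xᴴ * X)⁻¹) Xᴴ X,
      Matrix.mul_assoc X (Xᴴ * X)⁻¹ (Xᴴ * X), Matrix.nonsing_inv_mul _ hXXdet,
      Matrix.mul_one, sub_self]
  have hXP : Xᴴ * P = 0 := by
    have h := congrArg Matrix.conjTranspose hPX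
    rwa [Matrix.conjTranspose_mul, hPH.eq, Matrix.conjTranspose_zero] at h
  have hPP : P * P = P := by
    calc P * P = P * (1 - X * (Xᴴ * X)⁻¹ * Xᴴ) := by rw [← hP]
    _ = P - P * X * ((Xᴴ * X)⁻¹ * Xᴴ) := by
        simp only [Matrix.mul_sub, Matrix.mul_one, Matrix.mul_assoc]
    _ = P := by rw [hPX, Matrix.zero_mul, sub_zero]
  -- the CLM picture
  set x : Matrix (Fin n) (Fin n) ℝ := -(t • (K * P)) with hxdef
  set y := auxPhi n x with hydef
  have hynorm : ‖y‖ < 1 := by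
    have h1 : y = -(t • (auxPhi n K * auxPhi n P)) := by
      rw [hydef, hxdef, _root_.map_neg, _root_.map_smul, _root_.map_mul]
    rw [h1, norm_neg]
    have hns := norm_smul t ((auxPhi n) K * (auxPhi n) P)
    rw [hns, Real.norm_eq_abs, abs_of_nonneg ht0]
    have h2 : ‖auxPhi n K * auxPhi n P‖ ≤ lam := by
      calc ‖auxPhi n K * auxPhi n P‖ ≤ ‖auxPhi n K‖ * ‖auxPhi n P‖ := norm_mul_le _ _
      _ ≤ lam * 1 := mul_le_mul (aux_normK K hK lam hlam) (aux_normProj P hPP hPH)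
            (norm_nonneg _) (le_of_lt hlampos)
      _ = lam := mul_one lam
    calc t * ‖auxPhi n K * auxPhi n P‖ ≤ t * lam := mul_le_mul_of_nonneg_left h2 ht0
    _ < 1 := htlam
  have hsumy : Summable (fun i : ℕ => y ^ i) := summable_geometric_of_norm_lt_one hynorm
  have hgeo : (∑' i : ℕ, y ^ i) * (1 - y) = 1 := geom_series_mul_neg y hynorm
  -- invertibility of C = 1 + t • (K * P)
  set C : Matrix (Fin n) (Fin n) ℝ := 1 + t • (K * P) with hCdef
  have hCx : C = 1 - x := by rw [hCdef, hxdef, sub_neg_eq_add]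
  have hphiC : auxPhi n C = 1 - y := by rw [hCx, _root_.map_sub, _root_.map_one, hydef]
  have hCunit : IsUnit C := by
    have h1 : IsUnit (1 - y) := ⟨Units.oneSub y hynorm, rfl⟩
    have h2 := h1.map (auxPhi n).symm
    rwa [← hphiC, StarAlgEquiv.symm_apply_apply] at h2
  have hCdet : IsUnit C.det := (Matrix.isUnit_iff_isUnit_det C).mp hCunit
  have hCC : C * C⁻¹ = 1 := Matrix.mul_nonsing_inv C hCdet
  -- sum of the Neumann series
  have hS : (∑' i : ℕ, y ^ i) = auxPhi n C⁻¹ := by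
    have h1 : (1 - y) * auxPhi n C⁻¹ = 1 := by
      rw [← hphiC, ← _root_.map_mul, hCC, _root_.map_one]
    calc (∑' i : ℕ, y ^ i) = (∑' i : ℕ, y ^ i) * ((1 - y) * auxPhi n C⁻¹) := by
          rw [h1, mul_one]
    _ = ((∑' i : ℕ, y ^ i) * (1 - y)) * auxPhi n C⁻¹ := by rw [mul_assoc]
    _ = auxPhi n C⁻¹ := by rw [hgeo, one_mul]
  have hx_pow : ∀ i : ℕ, x ^ i = (auxPhi n).symm (y ^ i) := fun i => by
    rw [hydef, ← auxPhi_pow, StarAlgEquiv.symm_apply_apply]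
  have hsumx : Summable (fun i : ℕ => x ^ i) := by
    have h1 := hsumy.map (AddMonoidHom.mk' ((auxPhi n).symm) (fun a b => _root_.map_add _ a b))
      (auxPsi_cont n)
    refine h1.congr fun i => ?_
    show (auxPhi n).symm (y ^ i) = x ^ i
    exact (hx_pow i).symm
  have htsum : (∑' i : ℕ, x ^ i) = C⁻¹ := by
    have h2 : HasSum (fun i : ℕ => y ^ i) (auxPhi n C⁻¹) := hS ▸ hsumy.hasSum
    have h3 := h2.map (AddMonoidHom.mk' ((auxPhi n).symm) (fun a b => _root_.map_add _ a b))
      (auxPsi_cont n)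
    have h4 : HasSum (fun i : ℕ => x ^ i) ((auxPhi n).symm (auxPhi n C⁻¹)) := by
      refine h3.congr_fun fun i => ?_
      show x ^ i = (auxPhi n).symm (y ^ i)
      exact hx_pow i
    rw [StarAlgEquiv.symm_apply_apply] at h4
    exact h4.tsum_eq
  -- the algebraic identity
  set B : Matrix (Fin p) (Fin p) ℝ := (Xᴴ * St⁻¹ * X)⁻¹ with hBdef
  set M : Matrix (Fin n) (Fin n) ℝ := St⁻¹ - St⁻¹ * X * B * Xᴴ * St⁻¹ with hMdef
  have hAS : St⁻¹ * St = 1 := Matrix.nonsing_inv_mul St hdet1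
  have hBA : B * (Xᴴ * (St⁻¹ * X)) = 1 := by
    have := Matrix.nonsing_inv_mul _ hdet2
    rwa [← hBdef, Matrix.mul_assoc] at this
  have hMX : M * X = 0 := by
    rw [hMdef]
    simp only [Matrix.sub_mul, Matrix.mul_assoc]
    rw [hBA, Matrix.mul_one, sub_self]
  have hMP : M * P = M := by
    rw [hP, Matrix.mul_sub, Matrix.mul_one]
    have h1 : M * (X * (Xᴴ * X)⁻¹ * Xᴴ) = 0 := by
      rw [Matrix.mul_assoc X (Xᴴ * X)⁻¹ Xᴴ, ← Matrix.mul_assoc M X ((Xᴴ * X)⁻¹ * Xᴴ), hMX,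
        Matrix.zero_mul]
    rw [h1, sub_zero]
  have hMSt : M * St = 1 - St⁻¹ * X * B * Xᴴ := by
    rw [hMdef, Matrix.sub_mul, hAS]
    congr 1
    rw [Matrix.mul_assoc (St⁻¹ * X * B) Xᴴ St⁻¹, Matrix.mul_assoc (St⁻¹ * X * B) (Xᴴ * St⁻¹) St,
      Matrix.mul_assoc Xᴴ St⁻¹ St, hAS, Matrix.mul_one]
  have hMStP : M * St * P = P := by
    rw [hMSt, Matrix.sub_mul, Matrix.one_mul, Matrix.mul_assoc (St⁻¹ * X * B) Xᴴ P, hXP,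
      Matrix.mul_zero, sub_zero]
  have htKP : t • (K * P) = (St - 1) * P := by
    rw [hSt, add_sub_cancel_left, Matrix.smul_mul]
  have hMC : M * C = P := by
    rw [hCdef, Matrix.mul_add, Matrix.mul_one, htKP, ← Matrix.mul_assoc, Matrix.mul_sub M St 1,
      Matrix.mul_one, Matrix.sub_mul, hMStP, hMP]
    abel
  have hfinal : M = P * C⁻¹ := by
    calc M = M * (C * C⁻¹) := by rw [hCC, Matrix.mul_one]
    _ = (M * C) * C⁻¹ := by rw [Matrix.mul_assoc]
    _ = P * C⁻¹ := by rw [hMC]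
  exact ⟨hdet1, hdet2, hfinal, hsumx, by rw [htsum]⟩
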